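/- For 0 < q < p ≤ 1 and natural numbers m, n ≥ 1, the (p,q)-Beta and (p,q)-Gamma functions satisfy B_{p,q}(m,n) = p^{(n-1)(2m+n-2)/2} · Γ_{p,q}(m) Γ_{p,q}(n) / Γ_{p,q}(m+n). -/

import Mathlib

noncomputable section

/-- The (p,q)-number [n]_{p,q} = (p^n - q^n)/(p - q). -/
def pqNum (p q : ℝ) (n : ℕ) : ℝ := (p ^ n - q ^ n) / (p - q)

/-- The (p,q)-factorial [n]_{p,q}!. -/
def pqFactorial (p q : ℝ) (n : ℕ) : ℝ := ∏ k ∈ Finset.range n, pqNum p q (k + 1)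

/-- The (p,q)-binomial coefficient. -/
def pqBinom (p q : ℝ) (n k : ℕ) : ℝ :=
  pqFactorial p q n / (pqFactorial p q (n - k) * pqFactorial p q k)

/-- The (p,q)-power basis (a ⊖ b)^n_{p,q} = ∏_{j=0}^{n-1} (p^j a - q^j b). -/
def pqPow (p q a b : ℝ) (n : ℕ) : ℝ := ∏ j ∈ Finset.range n, (p ^ j * a - q ^ j * b)

/-- The (p,q)-derivative. -/
def pqDeriv (p q : ℝ) (f : ℝ → ℝ) (x : ℝ) : ℝ := (f (p * x) - f (q * x)) / ((p - q) * x)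

/-- The (p,q)-integral of f over [0,1] (case 0 < q < p). -/
def pqInt (p q : ℝ) (f : ℝ → ℝ) : ℝ :=
  (p - q) * ∑' k : ℕ, (q ^ k / p ^ (k + 1)) * f (q ^ k / p ^ (k + 1))

/-- The (p,q)-Beta function B_{p,q}(m,n) = ∫₀¹ x^{m-1} (1 ⊖ qx)^{n-1} d_{p,q}x. -/
def pqBeta (p q : ℝ) (m n : ℕ) : ℝ :=
  pqInt p q (fun x => x ^ (m - 1) * pqPow p q 1 (q * x) (n - 1))

/-- The (p,q)-Gamma function: Γ_{p,q}(n+1) = [n]_{p,q}!. -/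
def pqGamma (p q : ℝ) (n : ℕ) : ℝ := pqFactorial p q (n - 1)

/-- The (p,q)-Bernstein basis b_{n,k}^{p,q}(1,x). -/
def bBasis (p q : ℝ) (n k : ℕ) (x : ℝ) : ℝ :=
  pqBinom p q n k * p ^ (k * (k - 1) / 2) / p ^ (n * (n - 1) / 2) * x ^ k *
    pqPow p q 1 x (n - k)

/-- The kernel b_{n,k}^{p,q}(t) = [n choose k] t^k (1 ⊖ qt)^{n-k}. -/
def bKernel (p q : ℝ) (n k : ℕ) (t : ℝ) : ℝ :=
  pqBinom p q n k * t ^ k * pqPow p q 1 (q * t) (n - k)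

/-- The (p,q)-Bernstein operator B_{n,p,q}(f,x). -/
def pqBernstein (p q : ℝ) (n : ℕ) (f : ℝ → ℝ) (x : ℝ) : ℝ :=
  ∑ k ∈ Finset.range (n + 1),
    bBasis p q n k x * f (p ^ (n - k) * pqNum p q k / pqNum p q n)

/-- The (p,q)-Bernstein-Durrmeyer operator D_n^{p,q}(f,x). -/
def pqDurrmeyer (p q : ℝ) (n : ℕ) (f : ℝ → ℝ) (x : ℝ) : ℝ :=
  pqNum p q (n + 1) *
    ∑ k ∈ Finset.Icc 1 n, (p ^ ((n - k + 1) * (n + k) / 2))⁻¹ * bBasis p q n k x *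
      pqInt p q (fun t => bKernel p q n (k - 1) t * f t)
  + bBasis p q n 0 x * f 0


-- Auxiliary material ------------------------------------------------------

/-- Auxiliary sequence: the k-th term of the (p,q)-integral defining Beta. -/
def pqG (p q : ℝ) (m n k : ℕ) : ℝ :=
  (q ^ k / p ^ (k + 1)) ^ m * pqPow p q 1 (q * (q ^ k / p ^ (k + 1))) n

lemma pqG_rec (p q : ℝ) (m n k : ℕ) :
    pqG p q m (n + 1) k = p ^ n * pqG p q m n k - q ^ (n + 1) * pqG p q (m + 1) n k := by
  unfold pqG pqPow
  rw [Finset.prod_range_succ]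
  ring

lemma evenHelp (a n : ℕ) : 2 ∣ n * (2 * a + n + 1) := by
  rcases Nat.even_or_odd n with h | h
  · exact (h.mul_right _).two_dvd
  · obtain ⟨j, hj⟩ := h
    exact ⟨n * (a + j + 1), by rw [hj]; ring⟩

lemma expL1 (m n : ℕ) (hm : 1 ≤ m) :
    n * (2 * (m + 1) + n - 1) / 2 = n + n * (2 * m + n - 1) / 2 := by
  obtain ⟨a, rfl⟩ := Nat.exists_eq_add_of_le hm
  rw [show 2 * (1 + a + 1) + n - 1 = 2 * a + n + 3 by omega,
    show 2 * (1 + a) + n - 1 = 2 * a + n + 1 by omega,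
    show n * (2 * a + n + 3) = n * (2 * a + n + 1) + 2 * n by ring]
  obtain ⟨d, hd⟩ := evenHelp a n
  rw [hd]; omega

lemma expL2 (m n : ℕ) (hm : 1 ≤ m) :
    (n + 1) * (2 * m + (n + 1) - 1) / 2 = m + n + n * (2 * m + n - 1) / 2 := by
  obtain ⟨a, rfl⟩ := Nat.exists_eq_add_of_le hm
  rw [show 2 * (1 + a) + (n + 1) - 1 = 2 * a + n + 2 by omega,
    show 2 * (1 + a) + n - 1 = 2 * a + n + 1 by omega,
    show (n + 1) * (2 * a + n + 2) = n * (2 * a + n + 1) + 2 * (a + n + 1) by ring]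
  obtain ⟨d, hd⟩ := evenHelp a n
  rw [hd]; omega

lemma pqNum_pos {p q : ℝ} (hq : 0 < q) (hqp : q < p) (n : ℕ) :
    0 < pqNum p q (n + 1) := by
  have : q ^ (n + 1) < p ^ (n + 1) := pow_lt_pow_left₀ hqp hq.le (Nat.succ_ne_zero n)
  exact div_pos (by linarith) (by linarith)

lemma pqFactorial_pos {p q : ℝ} (hq : 0 < q) (hqp : q < p) (n : ℕ) :
    0 < pqFactorial p q n :=
  Finset.prod_pos fun k _ => pqNum_pos hq hqp k

lemma pqG_summable {p q : ℝ} (hq : 0 < q) (hqp : q < p) (hp : p ≤ 1)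
    (m n : ℕ) (hm : 1 ≤ m) : Summable (pqG p q m n) := by
  obtain ⟨m', rfl⟩ := Nat.exists_eq_add_of_le hm
  have hp0 : 0 < p := hq.trans hqp
  have hr0 : (0:ℝ) ≤ q / p := div_nonneg hq.le hp0.le
  have hr1 : q / p < 1 := (div_lt_one hp0).2 hqp
  refine Summable.of_norm_bounded
    (((summable_geometric_of_lt_one hr0 hr1)).mul_left ((1/p) ^ (1 + m') * (1+1/p) ^ n)) ?_
  intro k
  set t : ℝ := q ^ k / p ^ (k + 1) with htdef
  have ht : t = (q/p) ^ k / p := by rw [htdef, div_pow, pow_succ]; ring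
  have htpos : 0 < t := div_pos (pow_pos hq k) (pow_pos hp0 _)
  have htle : t ≤ 1 / p := by
    rw [ht]
    gcongr
    exact pow_le_one₀ hr0 hr1.le
  have hprod : |pqPow p q 1 (q * t) n| ≤ (1 + 1/p) ^ n := by
    unfold pqPow
    rw [Finset.abs_prod]
    calc ∏ j ∈ Finset.range n, |p ^ j * 1 - q ^ j * (q * t)|
        ≤ ∏ j ∈ Finset.range n, (1 + 1/p) := by
          apply Finset.prod_le_prod (fun j _ => abs_nonneg _)
          intro j _
          have h1 : p ^ j ≤ 1 := pow_le_one₀ hp0.le hp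
          have h2 : q ^ j * q ≤ 1 := by
            have : q ^ j ≤ 1 := pow_le_one₀ hq.le (hqp.le.trans hp)
            nlinarith
          have h3 : 0 ≤ q ^ j * (q * t) := by positivity
          have h4 : q ^ j * (q * t) ≤ 1 / p := by
            calc q ^ j * (q * t) = (q ^ j * q) * t := by ring
            _ ≤ 1 * (1/p) := by
                apply mul_le_mul h2 htle htpos.le (by linarith [pow_nonneg hq.le j, hq.le])
            _ = 1/p := one_mul _
          rw [abs_le]
          constructor <;> nlinarith [pow_nonneg hp0.le j]
      _ = (1 + 1/p) ^ n := by rw [Finset.prod_const, Finset.card_range]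
  have htm : t ^ (1 + m') ≤ ((q/p) ^ k / p) * (1/p) ^ m' := by
    rw [add_comm, pow_succ]
    calc t ^ m' * t ≤ (1/p) ^ m' * ((q/p) ^ k / p) :=
          mul_le_mul (pow_le_pow_left₀ htpos.le htle m') (le_of_eq ht) htpos.le (by positivity)
      _ = ((q/p) ^ k / p) * (1/p) ^ m' := mul_comm _ _
  calc ‖pqG p q (1 + m') n k‖ = t ^ (1 + m') * |pqPow p q 1 (q * t) n| := by
        rw [pqG, Real.norm_eq_abs, abs_mul, abs_pow, abs_of_pos htpos]
    _ ≤ (((q/p) ^ k / p) * (1/p) ^ m') * (1 + 1/p) ^ n := by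
        apply mul_le_mul htm hprod (abs_nonneg _) (by positivity)
    _ = (1/p) ^ (1 + m') * (1+1/p) ^ n * (q/p) ^ k := by ring

lemma pqG_zero_tsum {p q : ℝ} (hq : 0 < q) (hqp : q < p) (m : ℕ) (hm : 1 ≤ m) :
    ∑' k, pqG p q m 0 k = 1 / (p ^ m - q ^ m) := by
  have hp0 : 0 < p := hq.trans hqp
  have hr0 : (0:ℝ) ≤ (q/p) ^ m := by positivity
  have hr1 : (q/p) ^ m < 1 :=
    pow_lt_one₀ (div_nonneg hq.le hp0.le) ((div_lt_one hp0).2 hqp) (by omega)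
  have hpm : q ^ m < p ^ m := pow_lt_pow_left₀ hqp hq.le (by omega)
  calc ∑' k, pqG p q m 0 k = ∑' k : ℕ, (1/p) ^ m * ((q/p) ^ m) ^ k := by
        apply tsum_congr; intro k
        rw [pqG, pqPow]
        simp only [Finset.range_zero, Finset.prod_empty, mul_one]
        have hp : p ≠ 0 := hp0.ne'
        field_simp
        ring
    _ = (1/p) ^ m * (1 - (q/p) ^ m)⁻¹ := by
        rw [tsum_mul_left, tsum_geometric_of_lt_one hr0 hr1]
    _ = 1 / (p ^ m - q ^ m) := by
        have h1 : (1:ℝ) - (q/p) ^ m ≠ 0 := by linarith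
        have h2 : p ^ m - q ^ m ≠ 0 := by linarith
        have hp : p ≠ 0 := hp0.ne'
        field_simp
        rw [one_div_pow, div_pow, mul_comm, ← div_eq_mul_one_div, sub_div, div_self (pow_ne_zero m hp)]

lemma pqNum_key {p q : ℝ} (hqp : q < p) (m n : ℕ) :
    pqNum p q (m + n + 1) - q ^ (n + 1) * pqNum p q m = p ^ m * pqNum p q (n + 1) := by
  have h : p - q ≠ 0 := sub_ne_zero.2 hqp.ne'
  unfold pqNum
  field_simp
  ring

lemma pqFactorial_succ (p q : ℝ) (k : ℕ) :
    pqFactorial p q (k + 1) = pqFactorial p q k * pqNum p q (k + 1) := by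
  rw [pqFactorial, Finset.prod_range_succ]; rfl

lemma pqFactorial_self (p q : ℝ) (m : ℕ) (hm : 1 ≤ m) :
    pqFactorial p q m = pqFactorial p q (m - 1) * pqNum p q m := by
  conv_lhs => rw [show m = (m - 1) + 1 by omega]
  rw [pqFactorial_succ, show m - 1 + 1 = m by omega]

lemma main_ind {p q : ℝ} (hq : 0 < q) (hqp : q < p) (hp : p ≤ 1) :
    ∀ n m : ℕ, 1 ≤ m →
      (p - q) * pqFactorial p q (m + n) * ∑' k, pqG p q m n k
        = p ^ (n * (2 * m + n - 1) / 2) * pqFactorial p q (m - 1) * pqFactorial p q n := by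
  have hpq : p - q ≠ 0 := sub_ne_zero.2 hqp.ne'
  intro n
  induction n with
  | zero =>
    intro m hm
    simp only [Nat.add_zero]
    rw [pqG_zero_tsum hq hqp m hm, pqFactorial_self p q m hm]
    have hpm : q ^ m < p ^ m := pow_lt_pow_left₀ hqp hq.le (by omega)
    have h2 : p ^ m - q ^ m ≠ 0 := by linarith
    simp only [Nat.zero_mul, Nat.zero_div, pow_zero, Nat.add_zero, pqFactorial,
      Finset.range_zero, Finset.prod_empty, mul_one, one_mul, pqNum]
    field_simp
  | succ n ih =>
    intro m hm
    have hs1 := pqG_summable hq hqp hp m n hm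
    have hs2 := pqG_summable hq hqp hp (m + 1) n (by omega)
    have hsplit : ∑' k, pqG p q m (n + 1) k
        = p ^ n * ∑' k, pqG p q m n k - q ^ (n + 1) * ∑' k, pqG p q (m + 1) n k := by
      rw [tsum_congr (fun k => pqG_rec p q m n k),
        (hs1.mul_left _).tsum_sub (hs2.mul_left _), tsum_mul_left, tsum_mul_left]
    have h1 := ih m hm
    have h2 := ih (m + 1) (by omega)
    rw [expL1 m n hm, show m + 1 + n = m + n + 1 by omega, Nat.add_sub_cancel,
      pqFactorial_succ p q (m + n), pqFactorial_self p q m hm, pow_add] at h2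
    rw [expL2 m n hm, hsplit, show m + (n + 1) = m + n + 1 by omega,
      pqFactorial_succ p q (m + n), pqFactorial_succ p q n, pow_add, pow_add]
    have key := pqNum_key hqp m n
    linear_combination (p ^ n * pqNum p q (m + n + 1)) * h1 - q ^ (n + 1) * h2
      + (p ^ n * p ^ (n * (2 * m + n - 1) / 2) * pqFactorial p q (m - 1)
          * pqFactorial p q n) * key

theorem pqBeta_eq_gamma (p q : ℝ) (hq : 0 < q) (hqp : q < p) (hp : p ≤ 1)
    (m n : ℕ) (hm : 1 ≤ m) (hn : 1 ≤ n) :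
    pqBeta p q m n =
      p ^ ((n - 1) * (2 * m + n - 2) / 2) *
        (pqGamma p q m * pqGamma p q n / pqGamma p q (m + n)) := by
  have hbeta : pqBeta p q m n = (p - q) * ∑' k, pqG p q m (n - 1) k := by
    obtain ⟨a, rfl⟩ := Nat.exists_eq_add_of_le hm
    rw [pqBeta, pqInt]
    congr 1
    apply tsum_congr
    intro k
    rw [pqG]
    simp only [show 1 + a - 1 = a from by omega]
    ring
  have h := main_ind hq hqp hp (n - 1) m hm
  rw [show 2 * m + (n - 1) - 1 = 2 * m + n - 2 by omega,
    show m + (n - 1) = m + n - 1 by omega] at h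
  rw [hbeta, pqGamma, pqGamma, pqGamma]
  have hD : pqFactorial p q (m + n - 1) ≠ 0 := (pqFactorial_pos hq hqp _).ne'
  field_simp
  linear_combination h
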